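/- For any two-layer ReLU network f_θ(x) = c₀ + c₁ x + Σ_{k=1}^{K} v_k ReLU(w_k x − b_k), the weight-decay penalty R(θ) = Σ_k (v_k² + w_k²)/2 satisfies R(θ) ≥ Σ_k |v_k||w_k| ≥ TV²(f_θ), where TV²(f_θ) is the total variation of the derivative of f_θ. -/

import Mathlib

open Set

private lemma evar_mono_le {f : ℝ → ℝ} {M : ℝ} (hf : Monotone f)
    (hM : ∀ x y : ℝ, f y - f x ≤ M) :
    eVariationOn f Set.univ ≤ ENNReal.ofReal M := by
  apply iSup_le
  rintro ⟨n, ⟨u, hu, -⟩⟩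
  calc ∑ i ∈ Finset.range n, edist (f (u (i + 1))) (f (u i))
      = ∑ i ∈ Finset.range n, ENNReal.ofReal (f (u (i + 1)) - f (u i)) := by
        refine Finset.sum_congr rfl fun i _ => ?_
        rw [edist_dist, Real.dist_eq, abs_of_nonneg]
        exact sub_nonneg_of_le (hf (hu (Nat.le_succ _)))
    _ = ENNReal.ofReal (∑ i ∈ Finset.range n, (f (u (i + 1)) - f (u i))) := by
        rw [ENNReal.ofReal_sum_of_nonneg]
        exact fun i _ => sub_nonneg_of_le (hf (hu (Nat.le_succ _)))
    _ = ENNReal.ofReal (f (u n) - f (u 0)) := by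
        rw [Finset.sum_range_sub fun i => f (u i)]
    _ ≤ ENNReal.ofReal M := ENNReal.ofReal_le_ofReal (hM _ _)

private lemma evar_anti_le {f : ℝ → ℝ} {M : ℝ} (hf : Antitone f)
    (hM : ∀ x y : ℝ, f y - f x ≤ M) :
    eVariationOn f Set.univ ≤ ENNReal.ofReal M := by
  have himg : (Neg.neg '' (Set.univ : Set ℝ)) = Set.univ := by
    ext x; simp [Set.mem_image]; exact ⟨-x, by simp⟩
  have h := eVariationOn.comp_eq_of_antitoneOn f (t := Set.univ) (Neg.neg : ℝ → ℝ)
    (fun x _ y _ hxy => neg_le_neg hxy)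
  rw [himg] at h
  rw [← h]
  exact evar_mono_le (fun x y hxy => hf (neg_le_neg hxy)) (fun x y => hM _ _)

/-- Variation of a half-line step function is at most the jump size. -/
private lemma evar_step (w b c : ℝ) :
    eVariationOn (fun t : ℝ => if 0 ≤ w * t - b then c else 0) Set.univ
      ≤ ENNReal.ofReal |c| := by
  have hdiff : ∀ (w' : ℝ) (x y : ℝ),
      (if 0 ≤ w' * y - b then c else 0) - (if 0 ≤ w' * x - b then c else 0) ≤ |c| := by
    intro w' x y
    by_cases h1 : 0 ≤ w' * y - b <;> by_cases h2 : 0 ≤ w' * x - b <;>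
      simp [h1, h2, le_abs_self, neg_le_abs, abs_nonneg]
  have key : ∀ w' : ℝ, 0 ≤ w' →
      eVariationOn (fun t : ℝ => if 0 ≤ w' * t - b then c else 0) Set.univ
        ≤ ENNReal.ofReal |c| := by
    intro w' hw'
    have hcond : ∀ x y : ℝ, x ≤ y → (0 ≤ w' * x - b) → (0 ≤ w' * y - b) := by
      intro x y hxy hx
      nlinarith
    rcases le_or_gt 0 c with hc | hc
    · refine evar_mono_le ?_ (hdiff w')
      intro x y hxy
      by_cases h2 : 0 ≤ w' * x - b
      · simp [h2, hcond x y hxy h2]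
      · by_cases h1 : 0 ≤ w' * y - b <;> simp [h1, h2, hc]
    · refine evar_anti_le ?_ (hdiff w')
      intro x y hxy
      by_cases h2 : 0 ≤ w' * x - b
      · simp [h2, hcond x y hxy h2]
      · by_cases h1 : 0 ≤ w' * y - b <;> simp [h1, h2, hc.le]
  rcases le_or_gt 0 w with hw | hw
  · exact key w hw
  · have himg : (Neg.neg '' (Set.univ : Set ℝ)) = Set.univ := by
      ext x; simp [Set.mem_image]; exact ⟨-x, by simp⟩
    have h := eVariationOn.comp_eq_of_antitoneOn
      (fun t : ℝ => if 0 ≤ (-w) * t - b then c else 0) (t := Set.univ) (Neg.neg : ℝ → ℝ)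
      (fun x _ y _ hxy => neg_le_neg hxy)
    rw [himg] at h
    have hfun : (fun t : ℝ => if 0 ≤ w * t - b then c else 0)
        = (fun t : ℝ => if 0 ≤ (-w) * t - b then c else 0) ∘ (Neg.neg : ℝ → ℝ) := by
      funext t
      simp [Function.comp, mul_neg, neg_mul]
    rw [hfun, h]
    exact key (-w) (by linarith)

theorem weight_decay_ge_secondTV (K : ℕ) (c₀ c₁ : ℝ) (v w b : Fin K → ℝ) :
    (∀ t : ℝ, (∀ k, w k * t - b k ≠ 0) →
      HasDerivAt (fun x : ℝ => c₀ + c₁ * x + ∑ k, v k * max (w k * x - b k) 0)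
        (c₁ + ∑ k, if 0 ≤ w k * t - b k then v k * w k else 0) t) ∧
    eVariationOn
        (fun t : ℝ => c₁ + ∑ k, if 0 ≤ w k * t - b k then v k * w k else 0) Set.univ
      ≤ ENNReal.ofReal (∑ k, |v k| * |w k|) ∧
    (∑ k, |v k| * |w k|) ≤ ∑ k, (v k ^ 2 + w k ^ 2) / 2 := by
  refine ⟨?_, ?_, ?_⟩
  · -- derivative
    intro t ht
    have hk : ∀ k : Fin K, HasDerivAt (fun x : ℝ => v k * max (w k * x - b k) 0)
        (if 0 ≤ w k * t - b k then v k * w k else 0) t := by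
      intro k
      have hcont : Continuous fun x : ℝ => w k * x - b k := by continuity
      rcases (ht k).lt_or_gt with h | h
      · rw [if_neg (not_le.mpr h)]
        have hev : (fun x : ℝ => v k * max (w k * x - b k) 0) =ᶠ[nhds t] fun _ => 0 := by
          have := hcont.continuousAt.eventually_mem (isOpen_Iio.mem_nhds (Set.mem_Iio.mpr h))
          filter_upwards [this] with x hx
          simp [max_eq_right (le_of_lt (Set.mem_Iio.mp hx))]
        exact (hasDerivAt_const t (0 : ℝ)).congr_of_eventuallyEq hev
      · rw [if_pos h.le]
        have hbase : HasDerivAt (fun x : ℝ => w k * x - b k) (w k) t := by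
          simpa using ((hasDerivAt_id t).const_mul (w k)).sub_const (b k)
        have hbase2 : HasDerivAt (fun x : ℝ => v k * (w k * x - b k)) (v k * w k) t :=
          hbase.const_mul (v k)
        have hev : (fun x : ℝ => v k * max (w k * x - b k) 0)
            =ᶠ[nhds t] fun x : ℝ => v k * (w k * x - b k) := by
          have := hcont.continuousAt.eventually_mem (isOpen_Ioi.mem_nhds (Set.mem_Ioi.mpr h))
          filter_upwards [this] with x hx
          simp [max_eq_left (le_of_lt (Set.mem_Ioi.mp hx))]
        exact hbase2.congr_of_eventuallyEq hev
    have := ((hasDerivAt_const t c₀).fun_add ((hasDerivAt_id t).const_mul c₁)).fun_add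
      (HasDerivAt.fun_sum (u := Finset.univ) fun k _ => hk k)
    simpa using this
  · -- variation bound
    have hshift : eVariationOn
        (fun t : ℝ => c₁ + ∑ k, if 0 ≤ w k * t - b k then v k * w k else 0) Set.univ
        = eVariationOn
        (fun t : ℝ => ∑ k, if 0 ≤ w k * t - b k then v k * w k else 0) Set.univ := by
      dsimp only [eVariationOn]
      congr 1 with p : 1
      congr 1 with i : 1
      rw [edist_dist, edist_dist, Real.dist_eq, Real.dist_eq, add_sub_add_left_eq_sub]
    rw [hshift]
    have hsum : eVariationOn
        (fun t : ℝ => ∑ k, if 0 ≤ w k * t - b k then v k * w k else 0) Set.univ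
        ≤ ∑ k, ENNReal.ofReal |v k * w k| := by
      apply iSup_le
      rintro ⟨n, ⟨u, hu, us⟩⟩
      calc ∑ i ∈ Finset.range n,
            edist (∑ k, if 0 ≤ w k * u (i + 1) - b k then v k * w k else 0)
                  (∑ k, if 0 ≤ w k * u i - b k then v k * w k else 0)
          ≤ ∑ i ∈ Finset.range n, ∑ k,
            edist (if 0 ≤ w k * u (i + 1) - b k then v k * w k else 0)
                  (if 0 ≤ w k * u i - b k then v k * w k else 0) := by
            refine Finset.sum_le_sum fun i _ => ?_
            rw [edist_dist, Real.dist_eq, ← Finset.sum_sub_distrib]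
            calc ENNReal.ofReal |∑ k, ((if 0 ≤ w k * u (i + 1) - b k then v k * w k else 0)
                    - (if 0 ≤ w k * u i - b k then v k * w k else 0))|
                ≤ ENNReal.ofReal (∑ k, |(if 0 ≤ w k * u (i + 1) - b k then v k * w k else 0)
                    - (if 0 ≤ w k * u i - b k then v k * w k else 0)|) :=
                  ENNReal.ofReal_le_ofReal (Finset.abs_sum_le_sum_abs _ _)
              _ = ∑ k, ENNReal.ofReal |(if 0 ≤ w k * u (i + 1) - b k then v k * w k else 0)
                    - (if 0 ≤ w k * u i - b k then v k * w k else 0)| :=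
                  ENNReal.ofReal_sum_of_nonneg fun k _ => abs_nonneg _
              _ = ∑ k, edist (if 0 ≤ w k * u (i + 1) - b k then v k * w k else 0)
                    (if 0 ≤ w k * u i - b k then v k * w k else 0) := by
                  refine Finset.sum_congr rfl fun k _ => ?_
                  rw [edist_dist, Real.dist_eq]
        _ = ∑ k, ∑ i ∈ Finset.range n,
            edist (if 0 ≤ w k * u (i + 1) - b k then v k * w k else 0)
                  (if 0 ≤ w k * u i - b k then v k * w k else 0) := Finset.sum_comm
        _ ≤ ∑ k, ENNReal.ofReal |v k * w k| := by
            refine Finset.sum_le_sum fun k _ => ?_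
            exact le_trans
              (eVariationOn.sum_le
                (f := fun t : ℝ => if 0 ≤ w k * t - b k then v k * w k else 0) (n := n) hu us)
              (evar_step (w k) (b k) (v k * w k))
    refine hsum.trans ?_
    rw [ENNReal.ofReal_sum_of_nonneg fun k _ => mul_nonneg (abs_nonneg _) (abs_nonneg _)]
    refine Finset.sum_le_sum fun k _ => ?_
    rw [abs_mul]
  · -- AM-GM
    refine Finset.sum_le_sum fun k _ => ?_
    nlinarith [sq_nonneg (|v k| - |w k|), sq_abs (v k), sq_abs (w k), abs_nonneg (v k),
      abs_nonneg (w k)]
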